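/- For every 1 ≤ p < ∞ there exists a measurable function f : ℝ → ℝ such that f ∉ Lᵖ(ℝ), f(x)·sin(x) ∈ Lᵖ(ℝ), and f(x + π) − f(x) ∈ Lᵖ(ℝ). -/

import Mathlib

open Real MeasureTheory
open scoped ENNReal NNReal

noncomputable def aSeq (k : ℤ) : ℝ := 1 / (5 * (|(k : ℝ)| + 1))

lemma aSeq_pos (k : ℤ) : 0 < aSeq k := by unfold aSeq; positivity

lemma aSeq_le (k : ℤ) : aSeq k ≤ 1/5 := by
  unfold aSeq
  rw [div_le_div_iff₀ (by positivity) (by norm_num)]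
  have := abs_nonneg ((k:ℝ)); nlinarith

noncomputable def Ik (k : ℤ) : Set ℝ := Set.Ico ((k:ℝ)*π) ((k:ℝ)*π + aSeq k)

noncomputable def Sset : Set ℝ := ⋃ k : ℤ, Ik k

noncomputable def fbad : ℝ → ℝ := Sset.indicator (fun _ => (1:ℝ))

lemma Ik_meas (k : ℤ) : MeasurableSet (Ik k) := measurableSet_Ico

lemma Sset_meas : MeasurableSet Sset := MeasurableSet.iUnion Ik_meas

lemma fbad_meas : Measurable fbad := measurable_const.indicator Sset_meas

lemma volume_Ik (k : ℤ) : volume (Ik k) = ENNReal.ofReal (aSeq k) := by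
  rw [Ik, Real.volume_Ico, add_sub_cancel_left]

lemma Ik_disjoint : Pairwise (Function.onFun Disjoint Ik) := by
  have hπ : (3:ℝ) < π := Real.pi_gt_three
  have key : ∀ j k : ℤ, j < k → Disjoint (Ik j) (Ik k) := by
    intro j k hjk
    rw [Ik, Ik, Set.Ico_disjoint_Ico]
    have h1 : aSeq j ≤ 1/5 := aSeq_le j
    have h2 : ((j:ℝ)+1) ≤ (k:ℝ) := by exact_mod_cast hjk
    calc min ((j:ℝ)*π + aSeq j) ((k:ℝ)*π + aSeq k) ≤ (j:ℝ)*π + aSeq j := min_le_left _ _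
      _ ≤ (k:ℝ)*π := by nlinarith
      _ ≤ max ((j:ℝ)*π) ((k:ℝ)*π) := le_max_right _ _
  intro j k hjk
  rcases lt_or_gt_of_ne hjk with h | h
  · exact key j k h
  · exact (key k j h).symm

lemma summable_nat_one_div_sq : Summable (fun n : ℕ => 1 / ((n:ℝ)^2 + 1)) := by
  have h := (summable_nat_add_iff 1).mpr
    ((summable_one_div_nat_pow (p := 2)).mpr (by norm_num))
  refine Summable.of_nonneg_of_le (fun n => by positivity) (fun n => ?_) (h.mul_left 2)
  rw [mul_one_div, div_le_div_iff₀ (by positivity) (by positivity)]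
  push_cast
  nlinarith [sq_nonneg ((n:ℝ) - 1)]

lemma summable_int_one_div_sq : Summable (fun k : ℤ => 1 / ((k:ℝ)^2 + 1)) := by
  apply Summable.of_nat_of_neg
  · simpa using summable_nat_one_div_sq
  · simpa using summable_nat_one_div_sq

lemma summable_aSeq_sq : Summable (fun k : ℤ => aSeq k * aSeq k) := by
  refine Summable.of_nonneg_of_le (fun k => mul_self_nonneg _) (fun k => ?_) summable_int_one_div_sq
  unfold aSeq
  rw [div_mul_div_comm, one_mul,
    div_le_div_iff₀ (by positivity) (by positivity)]
  have h1 := abs_nonneg ((k:ℝ))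
  have h2 := sq_abs ((k:ℝ))
  nlinarith

lemma aSeq_diff_le (k : ℤ) : |aSeq (k+1) - aSeq k| ≤ 1 / ((k:ℝ)^2 + 1) := by
  have hc : ((k+1 : ℤ) : ℝ) = (k:ℝ) + 1 := by push_cast; ring
  rcases le_or_gt 0 k with hk | hk
  · have hu : (0:ℝ) ≤ (k:ℝ) := by exact_mod_cast hk
    have e1 : aSeq k = 1 / (5*((k:ℝ)+1)) := by
      unfold aSeq; rw [abs_of_nonneg hu]
    have e2 : aSeq (k+1) = 1 / (5*((k:ℝ)+2)) := by
      unfold aSeq; rw [hc, abs_of_nonneg (by linarith)]; ring_nf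
    rw [e1, e2, abs_sub_comm, abs_of_nonneg (by
      rw [sub_nonneg]; apply one_div_le_one_div_of_le (by linarith); linarith)]
    rw [div_sub_div _ _ (by positivity : (5*((k:ℝ)+1)) ≠ 0) (by positivity : (5*((k:ℝ)+2)) ≠ 0),
      div_le_div_iff₀ (by positivity) (by positivity)]
    nlinarith
  · have hu : (k:ℝ) ≤ -1 := by
      have h1 : k ≤ -1 := by omega
      exact_mod_cast h1
    have hp1 : (0:ℝ) < 5*(-(k:ℝ)) := by nlinarith
    have hp2 : (0:ℝ) < 5*(-(k:ℝ)+1) := by nlinarith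
    have e1 : aSeq k = 1 / (5*(-(k:ℝ)+1)) := by
      unfold aSeq; rw [abs_of_nonpos (by linarith)]
    have e2 : aSeq (k+1) = 1 / (5*(-(k:ℝ))) := by
      unfold aSeq; rw [hc, abs_of_nonpos (by linarith)]; ring_nf
    rw [e1, e2, abs_of_nonneg (by
      rw [sub_nonneg]; apply one_div_le_one_div_of_le hp1; linarith)]
    rw [div_sub_div _ _ hp1.ne' hp2.ne',
      div_le_div_iff₀ (by positivity) (by positivity)]
    nlinarith

lemma fbad_mem {x : ℝ} (hx : x ∈ Sset) : fbad x = 1 := Set.indicator_of_mem hx _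

lemma fbad_not_mem {x : ℝ} (hx : x ∉ Sset) : fbad x = 0 := Set.indicator_of_notMem hx _

lemma fbad_nonneg (x : ℝ) : 0 ≤ fbad x := by
  by_cases hx : x ∈ Sset
  · rw [fbad_mem hx]; norm_num
  · rw [fbad_not_mem hx]

lemma fbad_le_one (x : ℝ) : fbad x ≤ 1 := by
  by_cases hx : x ∈ Sset
  · rw [fbad_mem hx]
  · rw [fbad_not_mem hx]; norm_num

lemma memLp_aux {p : ℝ} (hp : 1 ≤ p) {g : ℝ → ℝ}
    (hm : AEStronglyMeasurable g volume) (hb : ∀ x, |g x| ≤ 1)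
    (hi : (∫⁻ x, (‖g x‖₊ : ℝ≥0∞)) < ⊤) :
    MemLp g (ENNReal.ofReal p) volume := by
  have hp0 : (0:ℝ) < p := lt_of_lt_of_le one_pos hp
  have hpne : ENNReal.ofReal p ≠ 0 := by
    simp only [ne_eq, ENNReal.ofReal_eq_zero, not_le]; linarith
  refine ⟨hm, ?_⟩
  rw [eLpNorm_eq_lintegral_rpow_enorm_toReal hpne (by simp)]
  have htoReal : (ENNReal.ofReal p).toReal = p := ENNReal.toReal_ofReal hp0.le
  have key : (∫⁻ x, (‖g x‖₊ : ℝ≥0∞) ^ (ENNReal.ofReal p).toReal) ≤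
      ∫⁻ x, (‖g x‖₊ : ℝ≥0∞) := by
    refine lintegral_mono fun x => ?_
    have h1 : (‖g x‖₊ : ℝ≥0∞) ≤ 1 := by
      rw [← enorm_eq_nnnorm, ← ofReal_norm]
      exact ENNReal.ofReal_le_one.mpr (by rw [Real.norm_eq_abs]; exact hb x)
    calc (‖g x‖₊ : ℝ≥0∞) ^ (ENNReal.ofReal p).toReal
        ≤ (‖g x‖₊ : ℝ≥0∞) ^ (1:ℝ) :=
          ENNReal.rpow_le_rpow_of_exponent_ge h1 (by rw [htoReal]; exact hp)
      _ = (‖g x‖₊ : ℝ≥0∞) := ENNReal.rpow_one _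
  refine ENNReal.rpow_lt_top_of_nonneg (by positivity) (lt_of_le_of_lt key hi).ne

lemma volume_Sset : volume Sset = ⊤ := by
  rw [Sset, measure_iUnion Ik_disjoint Ik_meas]
  by_contra h
  have hsum : Summable (fun k : ℤ => (aSeq k).toNNReal) := by
    apply ENNReal.tsum_coe_ne_top_iff_summable.mp
    intro htop
    apply h
    rw [← htop]
    congr 1
    funext k
    rw [volume_Ik, ENNReal.ofReal]
  have hsumR : Summable (fun k : ℤ => aSeq k) := by
    have h2 := NNReal.summable_coe.mpr hsum
    simpa [Real.coe_toNNReal _ (aSeq_pos _).le] using h2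
  have hnat : Summable (fun n : ℕ => aSeq n) :=
    hsumR.comp_injective (fun a b hab => by exact_mod_cast hab)
  have hnat2 : Summable (fun n : ℕ => (1:ℝ) / ((n:ℝ) + 1)) := by
    have h3 := hnat.mul_left 5
    refine h3.congr fun n => ?_
    unfold aSeq
    rw [abs_of_nonneg (by positivity)]
    push_cast
    field_simp
  have hnat3 : Summable (fun n : ℕ => (1:ℝ) / (n:ℝ)) := by
    apply (summable_nat_add_iff 1).mp
    refine hnat2.congr fun n => ?_
    push_cast
    ring
  exact Real.not_summable_one_div_natCast hnat3

lemma not_memLp_fbad {p : ℝ} (hp : 1 ≤ p) : ¬ MemLp fbad (ENNReal.ofReal p) volume := by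
  have hp0 : (0:ℝ) < p := lt_of_lt_of_le one_pos hp
  have hpne : ENNReal.ofReal p ≠ 0 := by
    simp only [ne_eq, ENNReal.ofReal_eq_zero, not_le]; linarith
  intro h
  have h2 := h.2
  rw [fbad, eLpNorm_indicator_const Sset_meas hpne (by simp)] at h2
  rw [volume_Sset] at h2
  have htoReal : (ENNReal.ofReal p).toReal = p := ENNReal.toReal_ofReal hp0.le
  rw [ENNReal.top_rpow_of_pos (by rw [htoReal]; positivity)] at h2
  simp at h2

lemma abs_sin_le {x : ℝ} {k : ℤ} (hx : x ∈ Ik k) : |Real.sin x| ≤ aSeq k := by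
  have hπ : (3:ℝ) < π := Real.pi_gt_three
  obtain ⟨h1, h2⟩ := hx
  set t := x - (k:ℝ)*π with ht
  have ht0 : 0 ≤ t := by simp only [ht]; linarith
  have ht1 : t ≤ aSeq k := by simp only [ht]; linarith
  have hs : Real.sin x = (-1)^k * Real.sin t := by
    rw [show x = t + (k:ℝ)*π by ring, Real.sin_add_int_mul_pi]
  have habs1 : |(-1:ℝ)^k| = 1 := by
    rcases Int.even_or_odd k with he | ho
    · rw [he.neg_one_zpow, abs_one]
    · rw [ho.neg_one_zpow, abs_neg, abs_one]
  rw [hs, abs_mul, habs1, one_mul]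
  rw [abs_of_nonneg (Real.sin_nonneg_of_nonneg_of_le_pi ht0 (by
    have := aSeq_le k; linarith))]
  calc Real.sin t ≤ t := Real.sin_le ht0
    _ ≤ aSeq k := ht1

lemma lintegral_prod_lt_top : (∫⁻ x, (‖fbad x * Real.sin x‖₊ : ℝ≥0∞)) < ⊤ := by
  have hbound : ∀ x, (‖fbad x * Real.sin x‖₊ : ℝ≥0∞) ≤
      ∑' k : ℤ, (Ik k).indicator (fun _ => ENNReal.ofReal (aSeq k)) x := by
    intro x
    by_cases hx : x ∈ Sset
    · obtain ⟨k, hk⟩ := Set.mem_iUnion.mp hx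
      have hle : (‖fbad x * Real.sin x‖₊ : ℝ≥0∞) ≤ ENNReal.ofReal (aSeq k) := by
        rw [← enorm_eq_nnnorm, ← ofReal_norm]
        apply ENNReal.ofReal_le_ofReal
        rw [Real.norm_eq_abs, abs_mul]
        calc |fbad x| * |Real.sin x| ≤ 1 * aSeq k := by
              apply mul_le_mul _ (abs_sin_le hk) (abs_nonneg _) (by norm_num)
              rw [abs_of_nonneg (fbad_nonneg x)]; exact fbad_le_one x
          _ = aSeq k := one_mul _
      refine hle.trans ?_
      calc ENNReal.ofReal (aSeq k)
          = (Ik k).indicator (fun _ => ENNReal.ofReal (aSeq k)) x :=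
            (Set.indicator_of_mem hk (fun _ => ENNReal.ofReal (aSeq k))).symm
        _ ≤ _ := ENNReal.le_tsum k
    · rw [fbad_not_mem hx]
      simp
  calc (∫⁻ x, (‖fbad x * Real.sin x‖₊ : ℝ≥0∞))
      ≤ ∫⁻ x, ∑' k : ℤ, (Ik k).indicator (fun _ => ENNReal.ofReal (aSeq k)) x :=
        lintegral_mono hbound
    _ = ∑' k : ℤ, ∫⁻ x, (Ik k).indicator (fun _ => ENNReal.ofReal (aSeq k)) x :=
        lintegral_tsum (fun k => (measurable_const.indicator (Ik_meas k)).aemeasurable)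
    _ = ∑' k : ℤ, ENNReal.ofReal (aSeq k) * volume (Ik k) := by
        congr 1; funext k; exact lintegral_indicator_const (Ik_meas k) _
    _ = ∑' k : ℤ, ENNReal.ofReal (aSeq k * aSeq k) := by
        congr 1; funext k
        rw [volume_Ik, ← ENNReal.ofReal_mul (aSeq_pos k).le]
    _ = ENNReal.ofReal (∑' k : ℤ, aSeq k * aSeq k) :=
        (ENNReal.ofReal_tsum_of_nonneg (fun k => mul_self_nonneg _) summable_aSeq_sq).symm
    _ < ⊤ := ENNReal.ofReal_lt_top

noncomputable def Dk (k : ℤ) : Set ℝ :=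
  Set.Ico ((k:ℝ)*π + min (aSeq k) (aSeq (k+1))) ((k:ℝ)*π + max (aSeq k) (aSeq (k+1)))

noncomputable def Dset : Set ℝ := ⋃ k : ℤ, Dk k

lemma Dk_meas (k : ℤ) : MeasurableSet (Dk k) := measurableSet_Ico

lemma Dset_meas : MeasurableSet Dset := MeasurableSet.iUnion Dk_meas

lemma volume_Dset_lt_top : volume Dset < ⊤ := by
  calc volume Dset ≤ ∑' k : ℤ, volume (Dk k) := measure_iUnion_le _
    _ ≤ ∑' k : ℤ, ENNReal.ofReal (1 / ((k:ℝ)^2 + 1)) := by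
        refine ENNReal.tsum_le_tsum fun k => ?_
        rw [Dk, Real.volume_Ico]
        apply ENNReal.ofReal_le_ofReal
        have : (k:ℝ)*π + max (aSeq k) (aSeq (k+1)) - ((k:ℝ)*π + min (aSeq k) (aSeq (k+1)))
            = max (aSeq k) (aSeq (k+1)) - min (aSeq k) (aSeq (k+1)) := by ring
        rw [this, max_sub_min_eq_abs]
        exact aSeq_diff_le k
    _ = ENNReal.ofReal (∑' k : ℤ, 1 / ((k:ℝ)^2 + 1)) :=
        (ENNReal.ofReal_tsum_of_nonneg (fun k => by positivity) summable_int_one_div_sq).symm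
    _ < ⊤ := ENNReal.ofReal_lt_top

lemma shift_iff {x : ℝ} (hx : x ∉ Dset) : x + π ∈ Sset ↔ x ∈ Sset := by
  have hnd : ∀ k : ℤ, x ∉ Dk k := fun k hk => hx (Set.mem_iUnion.mpr ⟨k, hk⟩)
  have key : ∀ k : ℤ, (k:ℝ)*π ≤ x →
      (x < (k:ℝ)*π + aSeq k ↔ x < (k:ℝ)*π + aSeq (k+1)) := by
    intro k hkx
    have hd := hnd k
    rw [Dk, Set.mem_Ico, not_and_or, not_le, not_lt] at hd
    rcases hd with hd | hd
    · have ha : x < (k:ℝ)*π + aSeq k :=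
        lt_of_lt_of_le hd (by have := min_le_left (aSeq k) (aSeq (k+1)); linarith)
      have hb : x < (k:ℝ)*π + aSeq (k+1) :=
        lt_of_lt_of_le hd (by have := min_le_right (aSeq k) (aSeq (k+1)); linarith)
      exact ⟨fun _ => hb, fun _ => ha⟩
    · have ha : ¬ x < (k:ℝ)*π + aSeq k := by
        push_neg
        have := le_max_left (aSeq k) (aSeq (k+1)); linarith
      have hb : ¬ x < (k:ℝ)*π + aSeq (k+1) := by
        push_neg
        have := le_max_right (aSeq k) (aSeq (k+1)); linarith
      exact ⟨fun h => absurd h ha, fun h => absurd h hb⟩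
  constructor
  · intro hmem
    obtain ⟨j, hj⟩ := Set.mem_iUnion.mp hmem
    obtain ⟨hj1, hj2⟩ := hj
    refine Set.mem_iUnion.mpr ⟨j - 1, ?_⟩
    have hc : ((j - 1 : ℤ) : ℝ) = (j:ℝ) - 1 := by push_cast; ring
    have hkx : ((j-1 : ℤ):ℝ)*π ≤ x := by rw [hc]; nlinarith [Real.pi_pos]
    have hlt : x < ((j-1:ℤ):ℝ)*π + aSeq ((j-1)+1) := by
      rw [hc]
      have : (j-1)+1 = j := by ring
      rw [this]
      nlinarith [Real.pi_pos]
    refine ⟨hkx, ?_⟩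
    exact (key (j-1) hkx).mpr hlt
  · intro hmem
    obtain ⟨k, hk⟩ := Set.mem_iUnion.mp hmem
    obtain ⟨hk1, hk2⟩ := hk
    refine Set.mem_iUnion.mpr ⟨k + 1, ?_⟩
    have hc : ((k + 1 : ℤ) : ℝ) = (k:ℝ) + 1 := by push_cast; ring
    have hlt : x < (k:ℝ)*π + aSeq (k+1) := (key k hk1).mp hk2
    constructor
    · rw [hc]; nlinarith [Real.pi_pos]
    · rw [hc]; nlinarith [Real.pi_pos]

lemma diff_bound (x : ℝ) : (‖fbad (x + π) - fbad x‖₊ : ℝ≥0∞) ≤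
    Dset.indicator (fun _ => (1:ℝ≥0∞)) x := by
  by_cases hx : x ∈ Dset
  · rw [Set.indicator_of_mem hx]
    rw [← enorm_eq_nnnorm, ← ofReal_norm]
    apply ENNReal.ofReal_le_one.mpr
    rw [Real.norm_eq_abs, abs_sub_le_iff]
    constructor
    · have := fbad_le_one (x + π); have := fbad_nonneg x; linarith
    · have := fbad_le_one x; have := fbad_nonneg (x + π); linarith
  · have hiff := shift_iff hx
    have heq : fbad (x + π) = fbad x := by
      by_cases hs : x ∈ Sset
      · rw [fbad_mem hs, fbad_mem (hiff.mpr hs)]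
      · rw [fbad_not_mem hs, fbad_not_mem (fun hc => hs (hiff.mp hc))]
    rw [heq]
    simp

lemma lintegral_diff_lt_top : (∫⁻ x, (‖fbad (x + π) - fbad x‖₊ : ℝ≥0∞)) < ⊤ := by
  calc (∫⁻ x, (‖fbad (x + π) - fbad x‖₊ : ℝ≥0∞))
      ≤ ∫⁻ x, Dset.indicator (fun _ => (1:ℝ≥0∞)) x := lintegral_mono diff_bound
    _ = 1 * volume Dset := lintegral_indicator_const Dset_meas _
    _ < ⊤ := by rw [one_mul]; exact volume_Dset_lt_top

theorem exists_bad_function_Lp (p : ℝ) (hp : 1 ≤ p) :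
    ∃ f : ℝ → ℝ, Measurable f ∧
      ¬ MemLp f (ENNReal.ofReal p) volume ∧
      MemLp (fun x => f x * Real.sin x) (ENNReal.ofReal p) volume ∧
      MemLp (fun x => f (x + π) - f x) (ENNReal.ofReal p) volume := by
  refine ⟨fbad, fbad_meas, not_memLp_fbad hp, ?_, ?_⟩
  · refine memLp_aux hp ((fbad_meas.mul Real.measurable_sin).aestronglyMeasurable)
      (fun x => ?_) lintegral_prod_lt_top
    rw [abs_mul]
    have h1 : |fbad x| ≤ 1 := by
      rw [abs_of_nonneg (fbad_nonneg x)]; exact fbad_le_one x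
    have h2 := Real.abs_sin_le_one x
    nlinarith [abs_nonneg (fbad x), abs_nonneg (Real.sin x)]
  · refine memLp_aux hp (((fbad_meas.comp (measurable_add_const π)).sub
      fbad_meas).aestronglyMeasurable) (fun x => ?_) lintegral_diff_lt_top
    rw [abs_sub_le_iff]
    constructor
    · have := fbad_le_one (x + π); have := fbad_nonneg x; linarith
    · have := fbad_le_one x; have := fbad_nonneg (x + π); linarith
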